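/- Shearer-type inequality for mutual information: let U_1, …, U_m and V be random variables taking values in finite sets, defined on a common probability space, such that U_1, …, U_m are mutually independent, and write U = (U_1,…,U_m). Let k > 0 and let ν be a probability distribution on subsets S ⊆ [m] such that for every i ∈ [m], Σ_{S : i ∈ S} ν(S) ≤ 1/k. Then Σ_{S} ν(S) · I(U_S : V) ≤ I(U : V)/k, where U_S denotes the tuple (U_i)_{i∈S}. -/

import Mathlib

open Finset

/-- Distribution of the random variable `f` on a finite probability space `(Ω, p)`. -/
noncomputable def distOf {Ω T : Type} [Fintype Ω] [Fintype T] [DecidableEq T]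
    (p : Ω → ℝ) (f : Ω → T) : T → ℝ :=
  fun t => ∑ ω, if f ω = t then p ω else 0

/-- Shannon entropy (base-2) of a distribution on a finite set. -/
noncomputable def shannonEnt {T : Type} [Fintype T] (q : T → ℝ) : ℝ :=
  -∑ t, q t * Real.logb 2 (q t)

/-- Entropy `H(f)` of a random variable `f` on `(Ω, p)`. -/
noncomputable def Hrv {Ω T : Type} [Fintype Ω] [Fintype T] [DecidableEq T]
    (p : Ω → ℝ) (f : Ω → T) : ℝ :=
  shannonEnt (distOf p f)

/-- Mutual information `I(f : g) = H(f) + H(g) − H(f,g)` on `(Ω, p)`. -/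
noncomputable def mutInfo {Ω A B : Type} [Fintype Ω] [Fintype A] [DecidableEq A]
    [Fintype B] [DecidableEq B] (p : Ω → ℝ) (f : Ω → A) (g : Ω → B) : ℝ :=
  Hrv p f + Hrv p g - Hrv p (fun ω => (f ω, g ω))

section Core
variable {Ω : Type} [Fintype Ω]

lemma distOf_nonneg {T : Type} [Fintype T] [DecidableEq T] {p : Ω → ℝ}
    (hp0 : ∀ ω, 0 ≤ p ω) (f : Ω → T) (t : T) : 0 ≤ distOf p f t := by
  apply Finset.sum_nonneg; intro ω _; split <;> simp [hp0 ω]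

lemma distOf_sum {T : Type} [Fintype T] [DecidableEq T] (p : Ω → ℝ) (f : Ω → T) :
    ∑ t, distOf p f t = ∑ ω, p ω := by
  unfold distOf; rw [Finset.sum_comm]
  exact Finset.sum_congr rfl fun ω _ => by simp

lemma distOf_self_ge {T : Type} [Fintype T] [DecidableEq T] {p : Ω → ℝ}
    (hp0 : ∀ ω, 0 ≤ p ω) (f : Ω → T) (ω : Ω) : p ω ≤ distOf p f (f ω) := by
  unfold distOf
  have := Finset.single_le_sum (f := fun ω' => if f ω' = f ω then p ω' else 0)
    (fun ω' _ => by split <;> simp [hp0 ω']) (Finset.mem_univ ω)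
  simpa using this

/-- pushforward formula for sums -/
lemma sum_pushforward {T : Type} [Fintype T] [DecidableEq T] (p : Ω → ℝ) (f : Ω → T)
    (G : T → ℝ) : ∑ ω, p ω * G (f ω) = ∑ t, distOf p f t * G t := by
  unfold distOf
  simp only [Finset.sum_mul, ite_mul, zero_mul]
  rw [Finset.sum_comm]
  exact Finset.sum_congr rfl fun ω _ => by simp

lemma Hrv_eq_sum_omega {T : Type} [Fintype T] [DecidableEq T] (p : Ω → ℝ) (f : Ω → T) :
    Hrv p f = -∑ ω, p ω * Real.logb 2 (distOf p f (f ω)) := by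
  unfold Hrv shannonEnt
  rw [sum_pushforward p f (fun t => Real.logb 2 (distOf p f t))]

lemma Hrv_comp_inj {A B : Type} [Fintype A] [DecidableEq A] [Fintype B] [DecidableEq B]
    (p : Ω → ℝ) (f : Ω → A) (φ : A → B) (hφ : Function.Injective φ) :
    Hrv p (fun ω => φ (f ω)) = Hrv p f := by
  rw [Hrv_eq_sum_omega, Hrv_eq_sum_omega]
  congr 1
  apply Finset.sum_congr rfl; intro ω _
  have : distOf p (fun ω => φ (f ω)) (φ (f ω)) = distOf p f (f ω) := by
    unfold distOf; exact Finset.sum_congr rfl fun ω' _ => by simp [hφ.eq_iff]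
  rw [this]

lemma distOf_marg_fst {A B : Type} [Fintype A] [DecidableEq A] [Fintype B] [DecidableEq B]
    (p : Ω → ℝ) (f : Ω → A) (g : Ω → B) (c : B) :
    ∑ a, distOf p (fun ω => (f ω, g ω)) (a, c) = distOf p g c := by
  unfold distOf; rw [Finset.sum_comm]
  apply Finset.sum_congr rfl; intro ω _
  by_cases h : g ω = c <;> simp [Prod.ext_iff, h]

end Core

section Submod
variable {Ω : Type} [Fintype Ω]

lemma Hrv_submodular {A B C : Type} [Fintype A] [DecidableEq A] [Fintype B] [DecidableEq B]
    [Fintype C] [DecidableEq C]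
    (p : Ω → ℝ) (hp0 : ∀ ω, 0 ≤ p ω) (hp1 : ∑ ω, p ω = 1)
    (f : Ω → A) (g : Ω → B) (h : Ω → C) :
    Hrv p (fun ω => (f ω, (g ω, h ω))) + Hrv p h
      ≤ Hrv p (fun ω => (f ω, h ω)) + Hrv p (fun ω => (g ω, h ω)) := by
  set q3 := distOf p (fun ω => (f ω, (g ω, h ω))) with hq3
  set qfh := distOf p (fun ω => (f ω, h ω)) with hqfh
  set qgh := distOf p (fun ω => (g ω, h ω)) with hqgh
  set qh := distOf p h with hqh
  set X : A × (B × C) → ℝ := fun v => qfh (v.1, v.2.2) * qgh v.2 / (q3 v * qh v.2.2) with hX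
  have hq3n : ∀ v, 0 ≤ q3 v := distOf_nonneg hp0 _
  have hqfhn : ∀ v, 0 ≤ qfh v := distOf_nonneg hp0 _
  have hqghn : ∀ v, 0 ≤ qgh v := distOf_nonneg hp0 _
  have hqhn : ∀ v, 0 ≤ qh v := distOf_nonneg hp0 _
  -- marginals
  have margf : ∀ c, ∑ a, qfh (a, c) = qh c := fun c => distOf_marg_fst p f h c
  have margg : ∀ c, ∑ b, qgh (b, c) = qh c := fun c => distOf_marg_fst p g h c
  -- key bound : ∑ v, q3 v * X v ≤ 1
  have key : ∑ v, q3 v * X v ≤ 1 := by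
    have step1 : ∀ v, q3 v * X v ≤ qfh (v.1, v.2.2) * qgh v.2 / qh v.2.2 := by
      intro v
      show q3 v * (qfh (v.1, v.2.2) * qgh v.2 / (q3 v * qh v.2.2)) ≤ _
      rcases eq_or_lt_of_le (hq3n v) with h3 | h3
      · rw [← h3, zero_mul]
        exact div_nonneg (mul_nonneg (hqfhn _) (hqghn _)) (hqhn _)
      rcases eq_or_lt_of_le (hqhn v.2.2) with hh | hh
      · simp [← hh]
      · rw [show q3 v * (qfh (v.1, v.2.2) * qgh v.2 / (q3 v * qh v.2.2))
            = qfh (v.1, v.2.2) * qgh v.2 / qh v.2.2 from by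
          field_simp]
    calc ∑ v, q3 v * X v ≤ ∑ v, qfh (v.1, v.2.2) * qgh v.2 / qh v.2.2 :=
          Finset.sum_le_sum fun v _ => step1 v
      _ = ∑ a, ∑ b, ∑ c, qfh (a, c) * qgh (b, c) / qh c := by
          rw [Fintype.sum_prod_type]
          apply Finset.sum_congr rfl; intro a _
          rw [Fintype.sum_prod_type]
      _ = ∑ a, ∑ c, ∑ b, qfh (a, c) * qgh (b, c) / qh c := by
          apply Finset.sum_congr rfl; intro a _
          exact Finset.sum_comm
      _ = ∑ c, ∑ a, ∑ b, qfh (a, c) * qgh (b, c) / qh c := Finset.sum_comm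
      _ = ∑ c, (∑ a, qfh (a, c)) * (∑ b, qgh (b, c)) / qh c := by
          apply Finset.sum_congr rfl; intro c _
          rw [Finset.sum_mul_sum, Finset.sum_div]
          apply Finset.sum_congr rfl; intro a _
          rw [Finset.sum_div]
      _ = ∑ c, qh c * qh c / qh c := by
          apply Finset.sum_congr rfl; intro c _; rw [margf, margg]
      _ ≤ ∑ c, qh c := by
          apply Finset.sum_le_sum; intro c _
          rcases eq_or_lt_of_le (hqhn c) with hh | hh
          · rw [← hh]; simp
          · rw [mul_div_assoc, div_self (ne_of_gt hh), mul_one]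
      _ = 1 := by rw [hqh, distOf_sum, hp1]
  -- termwise log bound
  have term : ∀ ω, p ω * (Real.logb 2 (qfh (f ω, h ω)) + Real.logb 2 (qgh (g ω, h ω))
      - Real.logb 2 (q3 (f ω, (g ω, h ω))) - Real.logb 2 (qh (h ω)))
      ≤ (p ω * X (f ω, (g ω, h ω)) - p ω) / Real.log 2 := by
    intro ω
    rcases eq_or_lt_of_le (hp0 ω) with hpω | hpω
    · rw [← hpω]; simp
    · have h1 : 0 < qfh (f ω, h ω) := lt_of_lt_of_le hpω (distOf_self_ge hp0 _ ω)
      have h2 : 0 < qgh (g ω, h ω) := lt_of_lt_of_le hpω (distOf_self_ge hp0 _ ω)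
      have h3 : 0 < q3 (f ω, (g ω, h ω)) := lt_of_lt_of_le hpω (distOf_self_ge hp0 _ ω)
      have h4 : 0 < qh (h ω) := lt_of_lt_of_le hpω (distOf_self_ge hp0 _ ω)
      have hXv : X (f ω, (g ω, h ω))
          = qfh (f ω, h ω) * qgh (g ω, h ω) / (q3 (f ω, (g ω, h ω)) * qh (h ω)) := rfl
      have hXpos : 0 < X (f ω, (g ω, h ω)) := by rw [hXv]; positivity
      have hlog : Real.logb 2 (qfh (f ω, h ω)) + Real.logb 2 (qgh (g ω, h ω))
          - Real.logb 2 (q3 (f ω, (g ω, h ω))) - Real.logb 2 (qh (h ω))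
          = Real.logb 2 (X (f ω, (g ω, h ω))) := by
        rw [hXv, Real.logb_div (by positivity) (by positivity),
          Real.logb_mul h1.ne' h2.ne', Real.logb_mul h3.ne' h4.ne']
        ring
      rw [hlog]
      have hlb : Real.logb 2 (X (f ω, (g ω, h ω))) ≤ (X (f ω, (g ω, h ω)) - 1) / Real.log 2 := by
        rw [Real.logb]
        gcongr
        · exact Real.log_le_sub_one_of_pos hXpos
      calc p ω * Real.logb 2 (X (f ω, (g ω, h ω)))
          ≤ p ω * ((X (f ω, (g ω, h ω)) - 1) / Real.log 2) :=
            mul_le_mul_of_nonneg_left hlb hpω.le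
        _ = (p ω * X (f ω, (g ω, h ω)) - p ω) / Real.log 2 := by ring
  have push : ∑ ω, p ω * X (f ω, (g ω, h ω)) = ∑ v, q3 v * X v := by
    rw [hq3]; exact sum_pushforward p (fun ω => (f ω, (g ω, h ω))) X
  have main : ∑ ω, p ω * (Real.logb 2 (qfh (f ω, h ω)) + Real.logb 2 (qgh (g ω, h ω))
      - Real.logb 2 (q3 (f ω, (g ω, h ω))) - Real.logb 2 (qh (h ω))) ≤ 0 := by
    calc ∑ ω, p ω * (Real.logb 2 (qfh (f ω, h ω)) + Real.logb 2 (qgh (g ω, h ω))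
        - Real.logb 2 (q3 (f ω, (g ω, h ω))) - Real.logb 2 (qh (h ω)))
        ≤ ∑ ω, (p ω * X (f ω, (g ω, h ω)) - p ω) / Real.log 2 :=
          Finset.sum_le_sum fun ω _ => term ω
      _ = ((∑ ω, p ω * X (f ω, (g ω, h ω))) - 1) / Real.log 2 := by
          rw [← Finset.sum_div, Finset.sum_sub_distrib, hp1]
      _ ≤ 0 := by
          apply div_nonpos_of_nonpos_of_nonneg
          · rw [push]; linarith [key]
          · exact (Real.log_pos one_lt_two).le
  rw [Hrv_eq_sum_omega, Hrv_eq_sum_omega, Hrv_eq_sum_omega, Hrv_eq_sum_omega,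
    ← hq3, ← hqfh, ← hqgh, ← hqh]
  simp only [mul_add, mul_sub, Finset.sum_add_distrib, Finset.sum_sub_distrib] at main
  linarith [main]
end Submod
section Cond
variable {Ω : Type} [Fintype Ω]

lemma Hrv_pair_unit {A : Type} [Fintype A] [DecidableEq A] (p : Ω → ℝ) (f : Ω → A) :
    Hrv p (fun ω => (f ω, ())) = Hrv p f :=
  Hrv_comp_inj p f (fun a => (a, ())) (fun _ _ h => congrArg Prod.fst h)

lemma Hrv_unit (p : Ω → ℝ) (hp1 : ∑ ω, p ω = 1) : Hrv p (fun _ : Ω => ()) = 0 := by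
  unfold Hrv shannonEnt distOf
  simp [hp1]

lemma cond_mono {A C B : Type} [Fintype A] [DecidableEq A] [Fintype B] [DecidableEq B]
    [Fintype C] [DecidableEq C]
    (p : Ω → ℝ) (hp0 : ∀ ω, 0 ≤ p ω) (hp1 : ∑ ω, p ω = 1)
    (f : Ω → A) (z : Ω → C) (φ : C → B) :
    Hrv p (fun ω => (f ω, z ω)) - Hrv p z
      ≤ Hrv p (fun ω => (f ω, φ (z ω))) - Hrv p (fun ω => φ (z ω)) := by
  have sub := Hrv_submodular p hp0 hp1 f z (fun ω => φ (z ω))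
  have e1 : Hrv p (fun ω => (f ω, (z ω, φ (z ω)))) = Hrv p (fun ω => (f ω, z ω)) :=
    Hrv_comp_inj p (fun ω => (f ω, z ω)) (fun x => (x.1, (x.2, φ x.2)))
      (fun x y hxy => by
        have h1 := congrArg Prod.fst hxy
        have h2 := congrArg (fun v => v.2.1) hxy
        exact Prod.ext h1 h2)
  have e2 : Hrv p (fun ω => (z ω, φ (z ω))) = Hrv p z :=
    Hrv_comp_inj p z (fun c => (c, φ c)) (fun _ _ hab => congrArg Prod.fst hab)
  linarith

lemma cond_le_H {A C : Type} [Fintype A] [DecidableEq A] [Fintype C] [DecidableEq C]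
    (p : Ω → ℝ) (hp0 : ∀ ω, 0 ≤ p ω) (hp1 : ∑ ω, p ω = 1)
    (f : Ω → A) (z : Ω → C) :
    Hrv p (fun ω => (f ω, z ω)) - Hrv p z ≤ Hrv p f := by
  have h := cond_mono p hp0 hp1 f z (fun _ => ())
  simp only [Hrv_pair_unit, Hrv_unit p hp1] at h
  linarith

end Cond
section Indep

lemma prod_mul_logb {ι : Type} [DecidableEq ι] (s : Finset ι) (x : ι → ℝ)
    (hx : ∀ i, 0 ≤ x i) :
    (∏ i ∈ s, x i) * Real.logb 2 (∏ i ∈ s, x i)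
      = ∑ j ∈ s, (∏ i ∈ s, x i) * Real.logb 2 (x j) := by
  induction s using Finset.induction_on with
  | empty => simp
  | @insert a s ha ih =>
    rw [Finset.prod_insert ha, Finset.sum_insert ha]
    rcases eq_or_lt_of_le (hx a) with h1 | h1
    · simp [← h1]
    rcases eq_or_lt_of_le (Finset.prod_nonneg (fun i _ => hx i)) with h2 | h2
    · rw [← h2]
      simp
    · rw [Real.logb_mul h1.ne' h2.ne', mul_add]
      congr 1
      calc (x a * ∏ i ∈ s, x i) * Real.logb 2 (∏ i ∈ s, x i)
          = x a * ((∏ i ∈ s, x i) * Real.logb 2 (∏ i ∈ s, x i)) := by ring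
        _ = x a * ∑ j ∈ s, (∏ i ∈ s, x i) * Real.logb 2 (x j) := by rw [ih]
        _ = ∑ j ∈ s, (x a * ∏ i ∈ s, x i) * Real.logb 2 (x j) := by
            rw [Finset.mul_sum]
            exact Finset.sum_congr rfl fun j _ => by ring

lemma shannonEnt_prod {m : ℕ} (α : Fin m → Type) [∀ i, Fintype (α i)]
    [∀ i, DecidableEq (α i)]
    (q : ∀ i, α i → ℝ) (hq0 : ∀ i t, 0 ≤ q i t) (hq1 : ∀ i, ∑ t, q i t = 1) :
    shannonEnt (fun u : ∀ i, α i => ∏ i, q i (u i)) = ∑ i, shannonEnt (q i) := by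
  classical
  set h : ∀ (_ : Fin m) (i : Fin m), α i → ℝ :=
    fun j i t => if i = j then q i t * Real.logb 2 (q i t) else q i t with hh
  have claim1 : ∀ (j : Fin m) (u : ∀ i, α i),
      (∏ i, q i (u i)) * Real.logb 2 (q j (u j)) = ∏ i, h j i (u i) := by
    intro j u
    rw [← Finset.mul_prod_erase Finset.univ (fun i => q i (u i)) (Finset.mem_univ j),
        ← Finset.mul_prod_erase Finset.univ (fun i => h j i (u i)) (Finset.mem_univ j)]
    have e1 : h j j (u j) = q j (u j) * Real.logb 2 (q j (u j)) := by rw [hh]; simp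
    have e2 : ∏ i ∈ Finset.univ.erase j, h j i (u i) = ∏ i ∈ Finset.univ.erase j, q i (u i) :=
      Finset.prod_congr rfl fun i hi => by
        rw [hh]; simp [(Finset.mem_erase.mp hi).1]
    rw [e1, e2]; ring
  have claim2 : ∀ j : Fin m, (∏ i, ∑ t, h j i t) = ∑ t, q j t * Real.logb 2 (q j t) := by
    intro j
    rw [← Finset.mul_prod_erase Finset.univ (fun i => ∑ t, h j i t) (Finset.mem_univ j)]
    have e1 : (∑ t, h j j t) = ∑ t, q j t * Real.logb 2 (q j t) :=
      Finset.sum_congr rfl fun t _ => by rw [hh]; simp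
    have e2 : ∏ i ∈ Finset.univ.erase j, (∑ t, h j i t) = 1 := by
      apply Finset.prod_eq_one
      intro i hi
      have : (∑ t, h j i t) = ∑ t, q i t :=
        Finset.sum_congr rfl fun t _ => by rw [hh]; simp [(Finset.mem_erase.mp hi).1]
      rw [this, hq1 i]
    rw [e1, e2, mul_one]
  have main : ∑ u : ∀ i, α i, (∏ i, q i (u i)) * Real.logb 2 (∏ i, q i (u i))
      = ∑ i, ∑ t, q i t * Real.logb 2 (q i t) := by
    calc ∑ u : ∀ i, α i, (∏ i, q i (u i)) * Real.logb 2 (∏ i, q i (u i))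
        = ∑ u : ∀ i, α i, ∑ j, (∏ i, q i (u i)) * Real.logb 2 (q j (u j)) :=
          Finset.sum_congr rfl fun u _ =>
            prod_mul_logb Finset.univ (fun i => q i (u i)) (fun i => hq0 i (u i))
      _ = ∑ j, ∑ u : ∀ i, α i, ∏ i, h j i (u i) := by
          rw [Finset.sum_comm]
          exact Finset.sum_congr rfl fun j _ =>
            Finset.sum_congr rfl fun u _ => claim1 j u
      _ = ∑ j, ∏ i, ∑ t, h j i t :=
          Finset.sum_congr rfl fun j _ => (Fintype.prod_sum _).symm
      _ = ∑ i, ∑ t, q i t * Real.logb 2 (q i t) :=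
          Finset.sum_congr rfl fun j _ => claim2 j
  unfold shannonEnt
  rw [main]
  exact (Finset.sum_neg_distrib _).symm

end Indep
section Prefixes
variable {m : ℕ} {Ω : Type} [Fintype Ω] {α : Fin m → Type}
  [∀ i, Fintype (α i)] [∀ i, DecidableEq (α i)]
  {γ : Type} [Fintype γ] [DecidableEq γ]

/-- Entropy of the pair (prefix of `U` restricted to `S ∩ [0,n)`, context `W`). -/
noncomputable def preH (p : Ω → ℝ) (U : ∀ i, Ω → α i) (W : Ω → γ)
    (S : Finset (Fin m)) (n : ℕ) : ℝ :=
  Hrv p (fun ω => ((fun j : {j : Fin m // j ∈ S ∧ j.val < n} => U j.1 ω), W ω))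

variable (p : Ω → ℝ) (U : ∀ i, Ω → α i) (W : Ω → γ)

lemma preH_zero (S : Finset (Fin m)) : preH p U W S 0 = Hrv p W := by
  have heq : (fun ω => ((fun j : {j : Fin m // j ∈ S ∧ j.val < 0} => U j.1 ω), W ω))
      = (fun ω => ((fun j : {j : Fin m // j ∈ S ∧ j.val < 0} =>
          (Nat.not_lt_zero j.1.val j.2.2).elim), W ω)) := by
    funext ω
    refine Prod.ext ?_ rfl
    funext j
    exact absurd j.2.2 (Nat.not_lt_zero _)
  unfold preH
  rw [heq]
  exact Hrv_comp_inj p W _ (fun a b hab => congrArg Prod.snd hab)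

lemma preH_top (S : Finset (Fin m)) : preH p U W S m
    = Hrv p (fun ω => ((fun j : {j : Fin m // j ∈ S} => U j.1 ω), W ω)) :=
  Hrv_comp_inj p (fun ω => ((fun j : {j : Fin m // j ∈ S} => U j.1 ω), W ω))
    (fun x => ((fun j : {j : Fin m // j ∈ S ∧ j.val < m} => x.1 ⟨j.1, j.2.1⟩), x.2))
    (fun x y hxy => by
      have h3 := congrArg Prod.snd hxy
      refine Prod.ext ?_ h3
      funext j
      obtain ⟨j, hj⟩ := j
      exact congrFun (congrArg Prod.fst hxy) ⟨j, hj, j.isLt⟩)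

lemma preH_notmem (n : ℕ) (hn : n < m) (S : Finset (Fin m))
    (hS : (⟨n, hn⟩ : Fin m) ∉ S) : preH p U W S (n+1) = preH p U W S n := by
  have hlt : ∀ j : {j : Fin m // j ∈ S ∧ j.val < n+1}, j.1.val < n := by
    intro j
    rcases Nat.lt_succ_iff_lt_or_eq.mp j.2.2 with h | h
    · exact h
    · exfalso
      apply hS
      have he : j.1 = ⟨n, hn⟩ := Fin.ext h
      rw [← he]
      exact j.2.1
  exact (Hrv_comp_inj p
    (fun ω => ((fun j : {j : Fin m // j ∈ S ∧ j.val < n+1} => U j.1 ω), W ω))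
    (fun x => ((fun j : {j : Fin m // j ∈ S ∧ j.val < n} =>
        x.1 ⟨j.1, j.2.1, Nat.lt_succ_of_lt j.2.2⟩), x.2))
    (fun x y hxy => by
      have h3 := congrArg Prod.snd hxy
      refine Prod.ext ?_ h3
      funext j
      exact congrFun (congrArg Prod.fst hxy) ⟨j.1, j.2.1, hlt j⟩)).symm

lemma preH_mem (n : ℕ) (hn : n < m) (S : Finset (Fin m))
    (hS : (⟨n, hn⟩ : Fin m) ∈ S) : preH p U W S (n+1)
    = Hrv p (fun ω => (U ⟨n, hn⟩ ω,
        ((fun j : {j : Fin m // j ∈ S ∧ j.val < n} => U j.1 ω), W ω))) :=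
  (Hrv_comp_inj p
    (fun ω => ((fun j : {j : Fin m // j ∈ S ∧ j.val < n+1} => U j.1 ω), W ω))
    (fun x => (x.1 ⟨⟨n, hn⟩, hS, Nat.lt_succ_self n⟩,
      ((fun j : {j : Fin m // j ∈ S ∧ j.val < n} =>
          x.1 ⟨j.1, j.2.1, Nat.lt_succ_of_lt j.2.2⟩), x.2)))
    (fun x y hxy => by
      have h1 := congrArg Prod.fst hxy
      have h2 := congrArg (fun v => v.2.1) hxy
      have h3 := congrArg (fun v => v.2.2) hxy
      refine Prod.ext ?_ h3
      funext j
      rcases j with ⟨⟨jv, hjm⟩, hj⟩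
      rcases Nat.lt_succ_iff_lt_or_eq.mp hj.2 with hcase | hcase
      · exact congrFun h2 ⟨⟨jv, hjm⟩, hj.1, hcase⟩
      · subst hcase
        exact h1)).symm

lemma preH_le (hp0 : ∀ ω, 0 ≤ p ω) (hp1 : ∑ ω, p ω = 1)
    (n : ℕ) (hn : n < m) (S : Finset (Fin m)) (hS : (⟨n, hn⟩ : Fin m) ∈ S) :
    preH p U W S (n+1) - preH p U W S n ≤ Hrv p (U ⟨n, hn⟩) := by
  rw [preH_mem p U W n hn S hS]
  exact cond_le_H p hp0 hp1 (U ⟨n, hn⟩)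
    (fun ω => ((fun j : {j : Fin m // j ∈ S ∧ j.val < n} => U j.1 ω), W ω))

lemma preH_step (hp0 : ∀ ω, 0 ≤ p ω) (hp1 : ∑ ω, p ω = 1)
    (n : ℕ) (hn : n < m) (S : Finset (Fin m)) (hS : (⟨n, hn⟩ : Fin m) ∈ S) :
    preH p U W Finset.univ (n+1) - preH p U W Finset.univ n
      ≤ preH p U W S (n+1) - preH p U W S n := by
  rw [preH_mem p U W n hn Finset.univ (Finset.mem_univ _), preH_mem p U W n hn S hS]
  exact cond_mono p hp0 hp1 (U ⟨n, hn⟩)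
    (fun ω => ((fun j : {j : Fin m // j ∈ Finset.univ ∧ j.val < n} => U j.1 ω), W ω))
    (fun x => ((fun j : {j : Fin m // j ∈ S ∧ j.val < n} =>
        x.1 ⟨j.1, Finset.mem_univ _, j.2.2⟩), x.2))

lemma preH_tele (S : Finset (Fin m)) :
    ∑ i : Fin m, (preH p U W S (i.val + 1) - preH p U W S i.val)
      = preH p U W S m - preH p U W S 0 :=
  (Fin.sum_univ_eq_sum_range (fun n => preH p U W S (n+1) - preH p U W S n) m).trans
    (Finset.sum_range_sub (fun n => preH p U W S n) m)

end Prefixes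

section TopUnit
variable {m : ℕ} {Ω : Type} [Fintype Ω] {α : Fin m → Type}
  [∀ i, Fintype (α i)] [∀ i, DecidableEq (α i)]

lemma preH_top_unit (p : Ω → ℝ) (U : ∀ i, Ω → α i) (S : Finset (Fin m)) :
    preH p U (fun _ : Ω => ()) S m
      = Hrv p (fun ω => (fun j : {j : Fin m // j ∈ S} => U j.1 ω)) := by
  rw [preH_top]
  exact Hrv_pair_unit p (fun ω => (fun j : {j : Fin m // j ∈ S} => U j.1 ω))

end TopUnit

/-- Shearer-type inequality for mutual information: if `U_1, …, U_m` are mutually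
independent and `ν` is a distribution on subsets `S ⊆ [m]` with `Σ_{S ∋ i} ν(S) ≤ 1/k`
for every `i`, then `Σ_S ν(S)·I(U_S : V) ≤ I(U : V)/k`. -/
theorem shearer_mutual_information {m : ℕ} {Ω : Type} [Fintype Ω]
    (α : Fin m → Type) [∀ i, Fintype (α i)] [∀ i, DecidableEq (α i)]
    {β : Type} [Fintype β] [DecidableEq β]
    (p : Ω → ℝ) (hp0 : ∀ ω, 0 ≤ p ω) (hp1 : ∑ ω, p ω = 1)
    (U : ∀ i, Ω → α i) (V : Ω → β)
    (hind : ∀ u : ∀ i, α i,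
      distOf p (fun ω => (fun i => U i ω)) u = ∏ i, distOf p (U i) (u i))
    (k : ℝ) (hk : 0 < k)
    (ν : Finset (Fin m) → ℝ) (hν0 : ∀ S, 0 ≤ ν S) (hν1 : ∑ S, ν S = 1)
    (hνk : ∀ i : Fin m, ∑ S ∈ Finset.univ.filter (fun S => i ∈ S), ν S ≤ 1 / k) :
    ∑ S, ν S * mutInfo p (fun ω => (fun i : {i : Fin m // i ∈ S} => U i ω)) V
      ≤ mutInfo p (fun ω => (fun i => U i ω)) V / k := by
  set A : Fin m → ℝ := fun i =>
    Hrv p (U i) - (preH p U V Finset.univ (i.val+1) - preH p U V Finset.univ i.val) with hA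
  -- per-S telescoping identity
  have key_per_S : ∀ S : Finset (Fin m),
      mutInfo p (fun ω => (fun i : {i : Fin m // i ∈ S} => U i ω)) V
        = ∑ i : Fin m,
            ((preH p U (fun _ : Ω => ()) S (i.val+1) - preH p U (fun _ : Ω => ()) S i.val)
             - (preH p U V S (i.val+1) - preH p U V S i.val)) := by
    intro S
    rw [Finset.sum_sub_distrib, preH_tele p U (fun _ : Ω => ()) S, preH_tele p U V S,
        preH_zero p U (fun _ : Ω => ()) S, preH_zero p U V S, preH_top_unit p U S,
        preH_top p U V S, Hrv_unit p hp1]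
    unfold mutInfo
    ring
  -- per-term bound
  have hbound : ∀ (S : Finset (Fin m)) (i : Fin m),
      (preH p U (fun _ : Ω => ()) S (i.val+1) - preH p U (fun _ : Ω => ()) S i.val)
        - (preH p U V S (i.val+1) - preH p U V S i.val)
      ≤ if i ∈ S then A i else 0 := by
    intro S i
    by_cases hiS : i ∈ S
    · rw [if_pos hiS]
      simp only [hA]
      have h1 := preH_le p U (fun _ : Ω => ()) hp0 hp1 i.val i.isLt S hiS
      have h2 := preH_step p U V hp0 hp1 i.val i.isLt S hiS
      simp only [Fin.eta] at h1 h2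
      linarith
    · rw [if_neg hiS, preH_notmem p U (fun _ : Ω => ()) i.val i.isLt S hiS,
          preH_notmem p U V i.val i.isLt S hiS]
      simp
  have hA0 : ∀ i, 0 ≤ A i := by
    intro i
    simp only [hA]
    have h := preH_le p U V hp0 hp1 i.val i.isLt Finset.univ (Finset.mem_univ _)
    simp only [Fin.eta] at h
    linarith
  -- full mutual information
  have hfull : mutInfo p (fun ω => (fun i => U i ω)) V = ∑ i : Fin m, A i := by
    have hU : Hrv p (fun ω => (fun i => U i ω)) = ∑ i, Hrv p (U i) := by
      unfold Hrv
      have hd : distOf p (fun ω => (fun i => U i ω)) = fun u => ∏ i, distOf p (U i) (u i) :=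
        funext hind
      rw [hd]
      exact shannonEnt_prod α (fun i => distOf p (U i))
        (fun i t => distOf_nonneg hp0 (U i) t)
        (fun i => by rw [distOf_sum]; exact hp1)
    have hpair : Hrv p (fun ω =>
          ((fun j : {j : Fin m // j ∈ (Finset.univ : Finset (Fin m))} => U j.1 ω), V ω))
        = Hrv p (fun ω => ((fun i => U i ω), V ω)) :=
      Hrv_comp_inj p (fun ω => ((fun i => U i ω), V ω))
        (fun x => ((fun j : {j : Fin m // j ∈ (Finset.univ : Finset (Fin m))} => x.1 j.1), x.2))
        (fun x y hxy => by
          have h3 := congrArg Prod.snd hxy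
          refine Prod.ext ?_ h3
          funext i
          exact congrFun (congrArg Prod.fst hxy) ⟨i, Finset.mem_univ i⟩)
    have htel : ∑ i : Fin m, (preH p U V Finset.univ (i.val+1) - preH p U V Finset.univ i.val)
        = Hrv p (fun ω => ((fun i => U i ω), V ω)) - Hrv p V := by
      rw [preH_tele p U V Finset.univ, preH_zero p U V Finset.univ,
          preH_top p U V Finset.univ, hpair]
    simp only [hA]
    rw [Finset.sum_sub_distrib, htel, ← hU]
    unfold mutInfo
    ring
  rw [hfull]
  calc ∑ S, ν S * mutInfo p (fun ω => (fun i : {i : Fin m // i ∈ S} => U i ω)) V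
      ≤ ∑ S, ν S * ∑ i : Fin m, (if i ∈ S then A i else 0) := by
        apply Finset.sum_le_sum
        intro S _
        apply mul_le_mul_of_nonneg_left _ (hν0 S)
        rw [key_per_S S]
        exact Finset.sum_le_sum fun i _ => hbound S i
    _ = ∑ i : Fin m, (∑ S ∈ Finset.univ.filter (fun S => i ∈ S), ν S) * A i := by
        simp only [Finset.mul_sum]
        rw [Finset.sum_comm]
        apply Finset.sum_congr rfl
        intro i _
        rw [Finset.sum_filter, Finset.sum_mul]
        apply Finset.sum_congr rfl
        intro S _
        by_cases h : i ∈ S <;> simp [h]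
    _ ≤ ∑ i : Fin m, (1/k) * A i := by
        apply Finset.sum_le_sum
        intro i _
        exact mul_le_mul_of_nonneg_right (hνk i) (hA0 i)
    _ = (∑ i : Fin m, A i) / k := by
        rw [← Finset.mul_sum]
        ring
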